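/- Define U_n = {ζ ∈ 𝕋 : 10|ζ - e^{-in/2ⁿ}| < n/2ⁿ} for n ≥ 1 and U₀ = 𝕋, and let Q_N = D_N²/(2N+1) with D_N the Dirichlet kernel. Then there is an absolute constant C such that ∑_{n≥0} (2^{n+1}+1)^{-1} |Q_{2ⁿ}(e^{in/2ⁿ} ζ)| ≤ C for every ζ ∈ 𝕋. -/

import Mathlib

open scoped ComplexConjugate

noncomputable section

abbrev ℓ2 (ι : Type) := lp (fun _ : ι => ℂ) 2

/-- `F` has rank at most `n`. -/
def FinRankLE {E : Type*} [NormedAddCommGroup E] [InnerProductSpace ℂ E]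
    (n : ℕ) (F : E →L[ℂ] E) : Prop :=
  ∃ v : Fin n → E, LinearMap.range (F : E →ₗ[ℂ] E) ≤ Submodule.span ℂ (Set.range v)

/-- Singular values as approximation numbers. -/
noncomputable def sv {E : Type*} [NormedAddCommGroup E] [InnerProductSpace ℂ E]
    (T : E →L[ℂ] E) (n : ℕ) : ℝ :=
  sInf {c : ℝ | ∃ F : E →L[ℂ] E, FinRankLE n F ∧ c = ‖T - F‖}

/-- Membership in the Schatten--von Neumann class `S_p`. -/
def MemSp {E : Type*} [NormedAddCommGroup E] [InnerProductSpace ℂ E]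
    (p : ℝ) (T : E →L[ℂ] E) : Prop :=
  Summable (fun n => sv T n ^ p)

/-- The Schatten `S_p` quasi-norm. -/
noncomputable def spNorm {E : Type*} [NormedAddCommGroup E] [InnerProductSpace ℂ E]
    (p : ℝ) (T : E →L[ℂ] E) : ℝ :=
  (∑' n, sv T n ^ p) ^ (1/p)

/-- The matrix of an operator on `ℓ²(ι)`. -/
noncomputable def matrixOf {ι : Type} [DecidableEq ι]
    (T : ℓ2 ι →L[ℂ] ℓ2 ι) (j k : ι) : ℂ :=
  (inner ℂ (lp.single 2 j (1:ℂ)) (T (lp.single 2 k 1)) : ℂ)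

/-- `a` is a Schur multiplier of `S_p`. -/
def IsSchurMult {ι : Type} [DecidableEq ι] (p : ℝ) (a : ι → ι → ℂ) : Prop :=
  ∀ T : ℓ2 ι →L[ℂ] ℓ2 ι, MemSp p T →
    ∃ S : ℓ2 ι →L[ℂ] ℓ2 ι, MemSp p S ∧ ∀ j k, matrixOf S j k = a j k * matrixOf T j k

/-- The Schur multiplier quasi-norm `‖a‖_{M_p}`. -/
noncomputable def multNorm {ι : Type} [DecidableEq ι] (p : ℝ) (a : ι → ι → ℂ) : ℝ :=
  sSup {c : ℝ | ∃ T S : ℓ2 ι →L[ℂ] ℓ2 ι, MemSp p T ∧ spNorm p T ≤ 1 ∧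
    (∀ j k, matrixOf S j k = a j k * matrixOf T j k) ∧ c = spNorm p S}

section Stmt19Aux
open Complex

lemma icc_map (N : ℕ) : Finset.Icc (-(N:ℤ)) (N:ℤ) =
    (Finset.range (2*N+1)).map ⟨fun j : ℕ => (j:ℤ) - N, fun a b h => by simp at h; omega⟩ := by
  ext k
  simp only [Finset.mem_Icc, Finset.mem_map, Finset.mem_range, Function.Embedding.coeFn_mk]
  constructor
  · intro h; exact ⟨(k + N).toNat, by omega, by show ((k + N).toNat : ℤ) - N = k; omega⟩
  · rintro ⟨j, hj, rfl⟩; show -(N:ℤ) ≤ (j:ℤ) - N ∧ (j:ℤ) - N ≤ N; omega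

lemma key2 (v : ℂ) (hv : ‖v‖ = 1) (N : ℕ) :
    ‖v - 1‖ * ‖∑ k ∈ Finset.Icc (-(N:ℤ)) (N:ℤ), v ^ k‖ ≤ 2 := by
  have hv0 : v ≠ 0 := by intro h; simp [h] at hv
  have hs : ∑ k ∈ Finset.Icc (-(N:ℤ)) (N:ℤ), v ^ k
      = (∑ j ∈ Finset.range (2*N+1), v ^ j) * v ^ (-(N:ℤ)) := by
    rw [icc_map, Finset.sum_map, Finset.sum_mul]
    refine Finset.sum_congr rfl fun j _ => ?_
    show v ^ ((j:ℤ) - N) = v ^ j * v ^ (-(N:ℤ))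
    rw [sub_eq_add_neg, zpow_add₀ hv0, zpow_natCast]
  rw [hs, ← norm_mul]
  have : (v - 1) * ((∑ j ∈ Finset.range (2*N+1), v ^ j) * v ^ (-(N:ℤ)))
      = (v ^ (2*N+1) - 1) * v ^ (-(N:ℤ)) := by
    rw [← geom_sum_mul v (2*N+1)]; ring
  rw [this, norm_mul, norm_zpow, hv]
  simp only [one_zpow, mul_one]
  calc ‖v ^ (2*N+1) - 1‖ ≤ ‖v ^ (2*N+1)‖ + ‖(1:ℂ)‖ := norm_sub_le _ _
    _ = 2 := by rw [norm_pow, hv]; norm_num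

lemma key1 (v : ℂ) (hv : ‖v‖ = 1) (N : ℕ) :
    ‖∑ k ∈ Finset.Icc (-(N:ℤ)) (N:ℤ), v ^ k‖ ≤ 2 * N + 1 := by
  calc ‖∑ k ∈ Finset.Icc (-(N:ℤ)) (N:ℤ), v ^ k‖
      ≤ ∑ k ∈ Finset.Icc (-(N:ℤ)) (N:ℤ), ‖v ^ k‖ := norm_sum_le _ _
    _ = ∑ k ∈ Finset.Icc (-(N:ℤ)) (N:ℤ), 1 := by
        refine Finset.sum_congr rfl fun k _ => ?_; rw [norm_zpow, hv, one_zpow]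
    _ = ((Finset.Icc (-(N:ℤ)) (N:ℤ)).card : ℝ) := by simp
    _ = 2 * N + 1 := by
        have h : ((N:ℤ) + 1 - -(N:ℤ)).toNat = 2*N+1 := by omega
        rw [Int.card_Icc, h]; push_cast; ring

-- antitone of n/2^n

lemma tanti {a b : ℕ} (ha : 1 ≤ a) (hab : a ≤ b) : (b:ℝ)/2^b ≤ (a:ℝ)/2^a := by
  rw [div_le_div_iff₀ (by positivity) (by positivity)]
  have key : b * 2^a ≤ a * 2^b := by
    obtain ⟨k, rfl⟩ := Nat.exists_eq_add_of_le hab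
    have h2 : k + 1 ≤ 2^k := Nat.lt_two_pow_self
    have hk : k ≤ a * k := Nat.le_mul_of_pos_left k ha
    have h3 : a + k ≤ a * 2^k := by
      have h5 : a * (k+1) ≤ a * 2^k := Nat.mul_le_mul_left a h2
      have h4 : a * (k+1) = a * k + a := by ring
      omega
    calc (a + k) * 2^a ≤ (a * 2^k) * 2^a := Nat.mul_le_mul_right _ h3
      _ = a * 2^(a+k) := by rw [pow_add]; ring
  calc ((b:ℝ)) * 2^a = ((b * 2^a : ℕ) : ℝ) := by push_cast; ring
    _ ≤ ((a * 2^b : ℕ) : ℝ) := Nat.cast_le.mpr key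
    _ = a * 2^b := by push_cast; ring

lemma overlap (ζ : ℂ) (hζ : ‖ζ‖ = 1) {n m : ℕ} (hn : 2 ≤ n) (hm : n + 2 ≤ m)
    (h1 : ‖Complex.exp (Complex.I * n / 2^n) * ζ - 1‖ < (n:ℝ)/(10 * 2^n))
    (h2 : ‖Complex.exp (Complex.I * m / 2^m) * ζ - 1‖ < (m:ℝ)/(10 * 2^m)) : False := by
  have hnR : (2:ℝ) ≤ (n:ℝ) := by exact_mod_cast hn
  set a : ℝ := (n:ℝ)/2^n with hadef
  set b : ℝ := (m:ℝ)/2^m with hbdef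
  have hea : Complex.I * n / 2^n = (a:ℂ) * Complex.I := by rw [hadef]; push_cast; ring
  have heb : Complex.I * m / 2^m = (b:ℂ) * Complex.I := by rw [hbdef]; push_cast; ring
  rw [hea, show (n:ℝ)/(10 * 2^n) = a/10 by rw [hadef]; ring] at h1
  rw [heb, show (m:ℝ)/(10 * 2^m) = b/10 by rw [hbdef]; ring] at h2
  have hapos : 0 < a := by
    rw [hadef]; have h0 : (0:ℝ) < (n:ℝ) := by linarith
    positivity
  have hbnonneg : 0 ≤ b := by rw [hbdef]; positivity
  -- b ≤ a/2
  have hba : b ≤ a/2 := by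
    have s1 : b ≤ ((n+2:ℕ):ℝ)/2^(n+2) := tanti (by omega) hm
    have s2 : ((n+2:ℕ):ℝ)/2^(n+2) ≤ a/2 := by
      rw [hadef]
      have hp : (0:ℝ) < 2^n := by positivity
      rw [div_div, div_le_div_iff₀ (by positivity) (by positivity)]
      push_cast
      rw [pow_succ, pow_succ]
      nlinarith [hp, hnR, mul_nonneg (by linarith : (0:ℝ) ≤ (n:ℝ) - 2) hp.le]
    linarith
  -- a ≤ 1/2
  have ha12 : a ≤ 1/2 := by
    have := tanti (a := 2) (b := n) (by norm_num) hn
    norm_num at this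
    rw [hadef]; linarith
  set δ : ℝ := a - b with hδdef
  have hδpos : 0 < δ := by rw [hδdef]; linarith
  have hδle : δ ≤ 1 := by rw [hδdef]; linarith
  -- upper bound for the chord
  have tri : ‖Complex.exp ((a:ℂ)*I) - Complex.exp ((b:ℂ)*I)‖ < a/10 + b/10 := by
    have e1 : (Complex.exp ((a:ℂ)*I) - Complex.exp ((b:ℂ)*I)) * ζ
        = (Complex.exp ((a:ℂ)*I) * ζ - 1) - (Complex.exp ((b:ℂ)*I) * ζ - 1) := by ring
    calc ‖Complex.exp ((a:ℂ)*I) - Complex.exp ((b:ℂ)*I)‖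
        = ‖(Complex.exp ((a:ℂ)*I) - Complex.exp ((b:ℂ)*I)) * ζ‖ := by
          rw [norm_mul, hζ, mul_one]
      _ = ‖(Complex.exp ((a:ℂ)*I) * ζ - 1) - (Complex.exp ((b:ℂ)*I) * ζ - 1)‖ := by rw [e1]
      _ ≤ ‖Complex.exp ((a:ℂ)*I) * ζ - 1‖ + ‖Complex.exp ((b:ℂ)*I) * ζ - 1‖ := norm_sub_le _ _
      _ < a/10 + b/10 := by linarith
  -- lower bound
  have low : Real.sin δ ≤ ‖Complex.exp ((a:ℂ)*I) - Complex.exp ((b:ℂ)*I)‖ := by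
    have e2 : Complex.exp ((a:ℂ)*I) - Complex.exp ((b:ℂ)*I)
        = Complex.exp ((b:ℂ)*I) * (Complex.exp ((δ:ℂ)*I) - 1) := by
      have hab : ((a:ℝ):ℂ) = (b:ℂ) + (δ:ℂ) := by
        rw [hδdef]; push_cast; ring
      rw [hab, add_mul, Complex.exp_add]; ring
    have him : (Complex.exp ((δ:ℂ)*I) - 1).im = Real.sin δ := by
      simp [Complex.exp_ofReal_mul_I_im]
    calc Real.sin δ ≤ |(Complex.exp ((δ:ℂ)*I) - 1).im| := him ▸ le_abs_self _
      _ ≤ ‖Complex.exp ((δ:ℂ)*I) - 1‖ := Complex.abs_im_le_norm _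
      _ = ‖Complex.exp ((b:ℂ)*I) * (Complex.exp ((δ:ℂ)*I) - 1)‖ := by
          rw [norm_mul, Complex.norm_exp_ofReal_mul_I, one_mul]
      _ = ‖Complex.exp ((a:ℂ)*I) - Complex.exp ((b:ℂ)*I)‖ := by rw [e2]
  have sin_lb : δ - δ^3/4 < Real.sin δ := by
    have := Real.sin_gt_sub_cube hδpos
    nlinarith [pow_pos hδpos 3]
  have cube : δ^3/4 ≤ δ/16 := by
    have hsq : δ^2 ≤ 1/4 := by nlinarith [(by rw [hδdef]; linarith : δ ≤ 1/2)]
    nlinarith [mul_le_mul_of_nonneg_left hsq hδpos.le]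
  -- contradiction
  nlinarith [tri, low, sin_lb, cube, hapos, hba]

lemma wnorm (ζ : ℂ) (hζ : ‖ζ‖ = 1) (n : ℕ) :
    ‖Complex.exp (Complex.I * n / 2 ^ n) * ζ‖ = 1 := by
  have h : Complex.I * n / 2^n = (((n:ℝ)/2^n : ℝ):ℂ) * Complex.I := by push_cast; ring
  rw [norm_mul, hζ, mul_one, h, Complex.norm_exp_ofReal_mul_I]

lemma icc_cast (n : ℕ) : Finset.Icc (-(2^n : ℤ)) (2^n : ℤ)
    = Finset.Icc (-((2^n : ℕ):ℤ)) (((2^n : ℕ)):ℤ) := by push_cast; rfl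

lemma term_eq (ζ : ℂ) (n : ℕ) :
    ((2 : ℝ) ^ (n + 1) + 1)⁻¹ *
      ‖(∑ k ∈ Finset.Icc (-(2 ^ n : ℤ)) (2 ^ n : ℤ),
          (Complex.exp (Complex.I * n / 2 ^ n) * ζ) ^ k) ^ 2
        / ((2 * 2 ^ n + 1 : ℂ))‖
    = ‖∑ k ∈ Finset.Icc (-(2 ^ n : ℤ)) (2 ^ n : ℤ),
          (Complex.exp (Complex.I * n / 2 ^ n) * ζ) ^ k‖ ^ 2
        / ((2 * (2:ℝ)^n + 1) * (2 * (2:ℝ)^n + 1)) := by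
  have hc : ‖(2 * 2 ^ n + 1 : ℂ)‖ = 2 * (2:ℝ)^n + 1 := by
    rw [show (2 * 2 ^ n + 1 : ℂ) = ((2 * 2 ^ n + 1 : ℕ) : ℂ) by push_cast; ring,
      Complex.norm_natCast]
    push_cast; ring
  rw [norm_div, norm_pow, hc, show (2:ℝ)^(n+1) = 2 * 2^n by rw [pow_succ]; ring]
  have hx : (0:ℝ) < 2 * 2^n + 1 := by positivity
  field_simp

lemma bound_one (ζ : ℂ) (hζ : ‖ζ‖ = 1) (n : ℕ) :
    ((2 : ℝ) ^ (n + 1) + 1)⁻¹ *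
      ‖(∑ k ∈ Finset.Icc (-(2 ^ n : ℤ)) (2 ^ n : ℤ),
          (Complex.exp (Complex.I * n / 2 ^ n) * ζ) ^ k) ^ 2
        / ((2 * 2 ^ n + 1 : ℂ))‖ ≤ 1 := by
  rw [term_eq]
  set X := ∑ k ∈ Finset.Icc (-(2 ^ n : ℤ)) (2 ^ n : ℤ),
      (Complex.exp (Complex.I * n / 2 ^ n) * ζ) ^ k with hX
  have hD : ‖X‖ ≤ 2 * (2:ℝ)^n + 1 := by
    rw [hX, icc_cast]
    have := key1 _ (wnorm ζ hζ n) (2^n)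
    calc _ ≤ 2 * ((2^n : ℕ) : ℝ) + 1 := this
      _ = 2 * (2:ℝ)^n + 1 := by push_cast; ring
  have hx : (0:ℝ) < 2 * 2^n + 1 := by positivity
  rw [div_le_one (by positivity)]
  nlinarith [norm_nonneg X]

lemma bound_dec (ζ : ℂ) (hζ : ‖ζ‖ = 1) {n : ℕ} (hn : 2 ≤ n)
    (h : (n:ℝ)/(10 * 2^n) ≤ ‖Complex.exp (Complex.I * n / 2 ^ n) * ζ - 1‖) :
    ((2 : ℝ) ^ (n + 1) + 1)⁻¹ *
      ‖(∑ k ∈ Finset.Icc (-(2 ^ n : ℤ)) (2 ^ n : ℤ),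
          (Complex.exp (Complex.I * n / 2 ^ n) * ζ) ^ k) ^ 2
        / ((2 * 2 ^ n + 1 : ℂ))‖ ≤ 100 * (1 / (n:ℝ)^2) := by
  rw [term_eq]
  set X := ∑ k ∈ Finset.Icc (-(2 ^ n : ℤ)) (2 ^ n : ℤ),
      (Complex.exp (Complex.I * n / 2 ^ n) * ζ) ^ k with hX
  set p : ℝ := (2:ℝ)^n with hp
  have hppos : (0:ℝ) < p := by rw [hp]; positivity
  have hnR : (2:ℝ) ≤ (n:ℝ) := by exact_mod_cast hn
  have hkey : ‖Complex.exp (Complex.I * n / 2 ^ n) * ζ - 1‖ * ‖X‖ ≤ 2 := by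
    rw [hX, icc_cast]
    have h2 := key2 _ (wnorm ζ hζ n) (2^n)
    calc _ = ‖_ - 1‖ * ‖∑ k ∈ Finset.Icc (-((2^n:ℕ):ℤ)) (((2^n:ℕ)):ℤ),
        (Complex.exp (Complex.I * n / 2 ^ n) * ζ) ^ k‖ := rfl
      _ ≤ 2 := h2
  have hXb : ‖X‖ ≤ 20 * p / n := by
    have hq : (0:ℝ) < (n:ℝ)/(10*p) := by positivity
    have : (n:ℝ)/(10*p) * ‖X‖ ≤ 2 :=
      le_trans (mul_le_mul_of_nonneg_right h (norm_nonneg X)) hkey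
    rw [show 20 * p / (n:ℝ) = 2 / ((n:ℝ)/(10*p)) by field_simp; ring]
    rw [le_div_iff₀ hq]
    linarith [this]
  have hXnn := norm_nonneg X
  calc ‖X‖^2 / ((2*p+1)*(2*p+1)) ≤ (20*p/n)^2 / ((2*p)*(2*p)) := by
        apply div_le_div₀ (by positivity) _ (by positivity)
        · nlinarith
        · nlinarith [pow_le_pow_left₀ hXnn hXb 2]
    _ = 100 * (1/(n:ℝ)^2) := by field_simp; ring

end Stmt19Aux

/-- Lemma 6.10: uniform bound for
`∑_n (2^{n+1}+1)⁻¹ |Q_{2ⁿ}(e^{in/2ⁿ} ζ)|` on the circle, where `Q_N = D_N²/(2N+1)`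
and `D_N` is the Dirichlet kernel; stated via uniformly bounded partial sums. -/
theorem stmt_19 :
    ∃ C : ℝ, ∀ ζ : ℂ, ‖ζ‖ = 1 → ∀ F : Finset ℕ,
      ∑ n ∈ F, ((2 : ℝ) ^ (n + 1) + 1)⁻¹ *
        ‖(∑ k ∈ Finset.Icc (-(2 ^ n : ℤ)) (2 ^ n : ℤ),
            (Complex.exp (Complex.I * n / 2 ^ n) * ζ) ^ k) ^ 2
          / ((2 * 2 ^ n + 1 : ℂ))‖ ≤ C := by
  classical
  refine ⟨4 + ∑' n : ℕ, 100 * (1/(n:ℝ)^2), fun ζ hζ F => ?_⟩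
  set P : ℕ → Prop := fun n =>
    n ≤ 1 ∨ ‖Complex.exp (Complex.I * n / 2^n) * ζ - 1‖ < (n:ℝ)/(10 * 2^n) with hP
  have hsummable : Summable (fun n : ℕ => 100 * (1/(n:ℝ)^2)) :=
    (Real.summable_one_div_nat_pow.mpr one_lt_two).mul_left 100
  set S := F.filter (fun n : ℕ =>
    2 ≤ n ∧ ‖Complex.exp (Complex.I * n / 2^n) * ζ - 1‖ < (n:ℝ)/(10 * 2^n)) with hS
  have hScard : S.card ≤ 2 := by
    rcases S.eq_empty_or_nonempty with he | hne
    · rw [he]; simp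
    · have hmin := Finset.mem_filter.mp (S.min'_mem hne)
      have hsub2 : S ⊆ Finset.Icc (S.min' hne) (S.min' hne + 1) := by
        intro m hm
        have h1 := S.min'_le m hm
        rw [Finset.mem_Icc]
        refine ⟨h1, ?_⟩
        by_contra hc
        push_neg at hc
        have hm' := Finset.mem_filter.mp hm
        exact overlap ζ hζ hmin.2.1 (by omega) hmin.2.2 hm'.2.2
      calc S.card ≤ (Finset.Icc (S.min' hne) (S.min' hne + 1)).card :=
            Finset.card_le_card hsub2
        _ = 2 := by rw [Nat.card_Icc]; omega
  have hsub : F.filter P ⊆ insert 0 (insert 1 S) := by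
    intro n hn
    simp only [Finset.mem_filter, hP] at hn
    by_cases h2 : 2 ≤ n
    · rcases hn.2 with h | h
      · omega
      · simp only [Finset.mem_insert]
        right; right; exact Finset.mem_filter.mpr ⟨hn.1, h2, h⟩
    · simp only [Finset.mem_insert]
      interval_cases n
      · left; rfl
      · right; left; rfl
  have hcard4 : (F.filter P).card ≤ 4 := by
    calc (F.filter P).card ≤ (insert 0 (insert 1 S)).card := Finset.card_le_card hsub
      _ ≤ 4 := by
          have h1 := Finset.card_insert_le 0 (insert 1 S)
          have h2 := Finset.card_insert_le 1 S
          omega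
  rw [← Finset.sum_filter_add_sum_filter_not F P]
  have part1 : ∑ n ∈ F.filter P, ((2 : ℝ) ^ (n + 1) + 1)⁻¹ *
        ‖(∑ k ∈ Finset.Icc (-(2 ^ n : ℤ)) (2 ^ n : ℤ),
            (Complex.exp (Complex.I * n / 2 ^ n) * ζ) ^ k) ^ 2
          / ((2 * 2 ^ n + 1 : ℂ))‖ ≤ 4 := by
    calc _ ≤ ∑ _n ∈ F.filter P, (1:ℝ) :=
          Finset.sum_le_sum (fun n _ => bound_one ζ hζ n)
      _ = ((F.filter P).card : ℝ) := by simp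
      _ ≤ 4 := by exact_mod_cast hcard4
  have part2 : ∑ n ∈ F.filter (fun n => ¬ P n), ((2 : ℝ) ^ (n + 1) + 1)⁻¹ *
        ‖(∑ k ∈ Finset.Icc (-(2 ^ n : ℤ)) (2 ^ n : ℤ),
            (Complex.exp (Complex.I * n / 2 ^ n) * ζ) ^ k) ^ 2
          / ((2 * 2 ^ n + 1 : ℂ))‖ ≤ ∑' n : ℕ, 100 * (1/(n:ℝ)^2) := by
    calc _ ≤ ∑ n ∈ F.filter (fun n => ¬ P n), 100 * (1/(n:ℝ)^2) := by
          refine Finset.sum_le_sum (fun n hn => ?_)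
          simp only [Finset.mem_filter, hP] at hn
          push_neg at hn
          exact bound_dec ζ hζ (by omega) hn.2.2
      _ ≤ ∑' n : ℕ, 100 * (1/(n:ℝ)^2) :=
          Summable.sum_le_tsum _ (fun i _ => by positivity) hsummable
  linarith [part1, part2]

end
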